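/- Let $\omega_{p,q}(u)$, $p,q\in[r]$, $u\in\mathcal{U}$, be matricially free Gaussian operators where $\omega_{p,q}(u)$ has variance $d_p\geq 0$ with $d_1+\cdots+d_r=1$. Set $\wp(u)=\sum_{p,q}\wp_{p,q}(u)$. Then $\wp(u)^*\wp(v)=\delta_{u,v}\,1$, and the operator $\omega(u)=\sum_{p,q=1}^{r}\omega_{p,q}(u)$ has the standard semicircle distribution with respect to the state $\Psi=\sum_q d_q\Psi_q$. -/

import Mathlib

open ContinuousLinearMap

/-- Basis-index test for nontrivial action of `℘_{p,q}(u)` on the matricially free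
Fock space of tracial type (see statement 0 for the encoding of the basis). -/
def actsOn {r t : ℕ} (q : Fin r) (x : Fin r × List (Fin r × Fin t)) : Bool :=
  match x.2 with
  | [] => x.1 == q
  | (a, _) :: _ => a == q

/-- Number of nonnegative lattice paths of length `m` from height `n` to height 0. -/
def pf : ℕ → ℕ → ℤ
  | 0, n => if n = 0 then 1 else 0
  | m+1, n => pf m (n+1) + if n = 0 then 0 else pf m (n-1)

lemma pf_vanish : ∀ m n, m < n → pf m n = 0 := by
  intro m
  induction m with
  | zero => intro n h; simp [pf]; omega
  | succ m ih =>
    intro n h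
    rw [pf, ih (n+1) (by omega)]
    rcases Nat.eq_zero_or_pos n with h0 | h0
    · omega
    · rw [if_neg (by omega), ih (n-1) (by omega)]; ring

lemma pf_odd : ∀ m n, (m + n) % 2 = 1 → pf m n = 0 := by
  intro m
  induction m with
  | zero => intro n h; rw [pf, if_neg (by omega)]
  | succ m ih =>
    intro n h
    rw [pf, ih (n+1) (by omega)]
    rcases Nat.eq_zero_or_pos n with h0 | h0
    · simp [h0]
    · rw [if_neg (by omega), ih (n-1) (by omega)]; ring

lemma pf_even : ∀ m n k, m + n = 2*k → pf m n = (Nat.choose m k : ℤ) - Nat.choose m (k+1) := by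
  intro m
  induction m with
  | zero =>
    intro n k h
    rcases Nat.eq_zero_or_pos n with h0 | h0
    · subst h0; have : k = 0 := by omega
      subst this; simp [pf]
    · rw [pf, if_neg (by omega), Nat.choose_eq_zero_of_lt (by omega),
        Nat.choose_eq_zero_of_lt (by omega)]
      simp
  | succ m ih =>
    intro n k h
    have hk : 1 ≤ k := by omega
    rcases Nat.eq_zero_or_pos n with h0 | h0
    · subst h0
      rw [pf, if_pos rfl, ih 1 k (by omega)]
      have hsymm : Nat.choose m (k-1) = Nat.choose m k := by
        have : m - k = k - 1 := by omega
        rw [← this, Nat.choose_symm (by omega)]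
      have h1 : Nat.choose (m+1) k = Nat.choose m (k-1) + Nat.choose m k := by
        have : k = (k-1) + 1 := by omega
        conv_lhs => rw [this, Nat.choose_succ_succ]
        rw [show (k-1).succ = k by omega]
      have h2 : Nat.choose (m+1) (k+1) = Nat.choose m k + Nat.choose m (k+1) :=
        Nat.choose_succ_succ m k
      rw [h1, h2, hsymm]
      push_cast
      ring
    · rw [pf, if_neg (by omega), ih (n+1) k (by omega), ih (n-1) (k-1) (by omega)]
      have h1 : Nat.choose (m+1) k = Nat.choose m (k-1) + Nat.choose m k := by
        have : k = (k-1) + 1 := by omega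
        conv_lhs => rw [this, Nat.choose_succ_succ]
        rw [show (k-1).succ = k by omega]
      have h2 : Nat.choose (m+1) (k+1) = Nat.choose m k + Nat.choose m (k+1) :=
        Nat.choose_succ_succ m k
      have h3 : k - 1 + 1 = k := by omega
      rw [h1, h2, h3]
      push_cast
      ring

lemma pf_zero_even (k : ℕ) : pf (2*k) 0 = catalan k := by
  rw [pf_even (2*k) 0 k (by omega)]
  have h1 : (Nat.choose (2*k) (k+1) : ℤ) * (k+1) = (Nat.choose (2*k) k : ℤ) * k := by
    have := Nat.choose_succ_right_eq (2*k) k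
    have h2 : 2*k - k = k := by omega
    rw [h2] at this
    exact_mod_cast congrArg (Nat.cast (R := ℤ)) this
  have hcb : (Nat.choose (2*k) k : ℤ) = (k+1) * catalan k := by
    have := succ_mul_catalan_eq_centralBinom k
    rw [Nat.centralBinom_eq_two_mul_choose] at this
    exact_mod_cast this.symm
  have hne : ((k:ℤ)+1) ≠ 0 := by positivity
  apply mul_left_cancel₀ hne
  have : ((k:ℤ)+1) * ((Nat.choose (2*k) k : ℤ) - Nat.choose (2*k) (k+1))
      = (Nat.choose (2*k) k : ℤ) * (k+1) - (Nat.choose (2*k) (k+1) : ℤ) * (k+1) := by ring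
  rw [this, h1, hcb]
  ring

/-- The unique row index acting on a basis vector. -/
def qOf {r t : ℕ} (x : Fin r × List (Fin r × Fin t)) : Fin r :=
  match x.2 with
  | [] => x.1
  | (a, _) :: _ => a

lemma actsOn_iff {r t : ℕ} (q : Fin r) (x : Fin r × List (Fin r × Fin t)) :
    actsOn q x = true ↔ q = qOf x := by
  rcases x with ⟨i, l⟩
  cases l with
  | nil =>
    show (i == q) = true ↔ q = i
    rw [beq_iff_eq]
    exact eq_comm
  | cons hd tl =>
    rcases hd with ⟨a, b⟩
    show (a == q) = true ↔ q = a
    rw [beq_iff_eq]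
    exact eq_comm

/-- If the matricially free Gaussian operators
`ω_{p,q}(u) = ℘_{p,q}(u) + ℘_{p,q}(u)*` have variances `d_p ≥ 0` with `d₁ + ⋯ + d_r = 1`,
then with `℘(u) = ∑_{p,q} ℘_{p,q}(u)` one has `℘(u)*℘(v) = δ_{u,v} 1`, and
`ω(u) = ∑_{p,q} ω_{p,q}(u)` has the standard semicircle distribution with respect to
`Ψ = ∑_q d_q Ψ_q`: its `2m`-th moment is the Catalan number `C_m` and odd moments vanish. -/
theorem stmt2 {H : Type} [NormedAddCommGroup H] [InnerProductSpace ℂ H] [CompleteSpace H]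
    (r t : ℕ) (d : Fin r → ℝ) (hd0 : ∀ p, 0 ≤ d p) (hd1 : ∑ p, d p = 1)
    (e : Fin r × List (Fin r × Fin t) → H) (he : Orthonormal ℂ e)
    (hdense : (Submodule.span ℂ (Set.range e)).topologicalClosure = ⊤)
    (c : Fin r → Fin r → Fin t → H →L[ℂ] H)
    (hc : ∀ p q u x, c p q u (e x) =
      if actsOn q x then (Real.sqrt (d p) : ℂ) • e (x.1, (p, u) :: x.2) else 0)
    (w : Fin t → H →L[ℂ] H) (hw : ∀ u, w u = ∑ p, ∑ q, c p q u)
    (om : Fin t → H →L[ℂ] H) (hom : ∀ u, om u = w u + adjoint (w u))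
    (Psi : (H →L[ℂ] H) → ℂ)
    (hPsi : ∀ X, Psi X = ∑ q, (d q : ℂ) *
      (@inner ℂ H _ (e (q, ([] : List (Fin r × Fin t)))) (X (e (q, []))))) :
    (∀ u v, adjoint (w u) * w v = if u = v then 1 else 0) ∧
    (∀ u (m : ℕ), Psi ((om u) ^ m) =
      if Even m then (catalan (m / 2) : ℂ) else 0) := by
  classical
  have hee : ∀ x y, (inner ℂ (e x) (e y) : ℂ) = if x = y then 1 else 0 :=
    orthonormal_iff_ite.mp he
  -- action of w on basis vectors
  have hwe : ∀ u x, w u (e x) = ∑ p, (Real.sqrt (d p) : ℂ) • e (x.1, (p, u) :: x.2) := by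
    intro u x
    rw [hw, ContinuousLinearMap.sum_apply]
    refine Finset.sum_congr rfl fun p _ => ?_
    rw [ContinuousLinearMap.sum_apply]
    rw [Finset.sum_eq_single (qOf x)]
    · rw [hc, if_pos ((actsOn_iff _ _).mpr rfl)]
    · intro q _ hq
      rw [hc, if_neg]
      intro hcontra
      exact hq ((actsOn_iff _ _).mp hcontra)
    · intro h; exact absurd (Finset.mem_univ _) h
  -- inner products of w-images of basis vectors
  have hcond : ∀ (p : Fin r) (u v : Fin t) (x y : Fin r × List (Fin r × Fin t)),
      ((x.1, (p, u) :: x.2) : Fin r × List (Fin r × Fin t)) = (y.1, (p, v) :: y.2) ↔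
        (u = v ∧ x = y) := by
    intro p u v x y
    rcases x with ⟨x1, x2⟩; rcases y with ⟨y1, y2⟩
    simp only [Prod.mk.injEq, List.cons.injEq]
    tauto
  have hww : ∀ (u v : Fin t) x y, (inner ℂ (w u (e x)) (w v (e y)) : ℂ)
      = (if u = v then 1 else 0) * (if x = y then 1 else 0) := by
    intro u v x y
    rw [hwe u x, hwe v y, sum_inner]
    have hterm : ∀ p : Fin r,
        (inner ℂ ((Real.sqrt (d p) : ℂ) • e (x.1, (p, u) :: x.2))
          (∑ p', (Real.sqrt (d p') : ℂ) • e (y.1, (p', v) :: y.2)) : ℂ)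
        = (d p : ℂ) * ((if u = v then 1 else 0) * (if x = y then 1 else 0)) := by
      intro p
      rw [inner_sum, Finset.sum_eq_single p]
      · rw [inner_smul_left, inner_smul_right, hee]
        have hconj : (starRingEnd ℂ) ((Real.sqrt (d p) : ℂ)) = (Real.sqrt (d p) : ℂ) :=
          Complex.conj_ofReal _
        rw [hconj]
        have hsq : ((Real.sqrt (d p) : ℂ)) * ((Real.sqrt (d p) : ℂ)) = (d p : ℂ) := by
          rw [← Complex.ofReal_mul, Real.mul_self_sqrt (hd0 p)]
        by_cases huv : u = v
        · by_cases hxy : x = y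
          · rw [if_pos ((hcond p u v x y).mpr ⟨huv, hxy⟩), if_pos huv, if_pos hxy]
            rw [mul_one, ← mul_assoc, hsq]; ring
          · rw [if_neg (fun h => hxy ((hcond p u v x y).mp h).2), if_pos huv, if_neg hxy]
            ring
        · rw [if_neg (fun h => huv ((hcond p u v x y).mp h).1), if_neg huv]
          ring
      · intro p' _ hp'
        rw [inner_smul_left, inner_smul_right, hee, if_neg]
        · ring
        · intro hcontra
          rw [Prod.mk.injEq, List.cons.injEq, Prod.mk.injEq] at hcontra
          exact hp' hcontra.2.1.1.symm
      · intro h; exact absurd (Finset.mem_univ _) h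
    rw [Finset.sum_congr rfl fun p _ => hterm p, ← Finset.sum_mul]
    have : (∑ p : Fin r, (d p : ℂ)) = 1 := by
      rw [← Complex.ofReal_sum, hd1, Complex.ofReal_one]
    rw [this, one_mul]
  -- density: vectors orthogonal to all e y are zero
  have horth : ∀ z : H, (∀ y, (inner ℂ (e y) z : ℂ) = 0) → z = 0 := by
    intro z hz
    have hmem : z ∈ (Submodule.span ℂ (Set.range e))ᗮ := by
      rw [Submodule.mem_orthogonal]
      intro v hv
      induction hv using Submodule.span_induction with
      | mem x hx => obtain ⟨y, rfl⟩ := hx; exact hz y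
      | zero => exact inner_zero_left z
      | add a b _ _ ha hb => rw [inner_add_left, ha, hb, add_zero]
      | smul a x _ hx => rw [inner_smul_left, hx, mul_zero]
    rw [Submodule.topologicalClosure_eq_top_iff.mp hdense, Submodule.mem_bot] at hmem
    exact hmem
  -- adjoint on image of basis vectors
  have hadj : ∀ (u v : Fin t) x, adjoint (w u) (w v (e x)) = if u = v then e x else 0 := by
    intro u v x
    rw [← sub_eq_zero]
    apply horth
    intro y
    rw [inner_sub_right, adjoint_inner_right, hww]
    by_cases huv : u = v
    · simp [huv, hee]
    · simp [huv]
  -- part 1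
  have part1 : ∀ u v, adjoint (w u) * w v = if u = v then 1 else 0 := by
    intro u v
    apply ContinuousLinearMap.ext_on
      (Submodule.dense_iff_topologicalClosure_eq_top.mpr hdense)
    rintro _ ⟨x, rfl⟩
    rw [ContinuousLinearMap.mul_apply, hadj]
    by_cases huv : u = v <;> simp [huv]
  refine ⟨part1, ?_⟩
  -- part 2
  intro u m
  -- adjoint annihilates the vacuum vectors
  have hadjvac : ∀ q : Fin r,
      adjoint (w u) (e (q, ([] : List (Fin r × Fin t)))) = 0 := by
    intro q
    apply horth
    intro y
    rw [adjoint_inner_right, hwe, sum_inner]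
    apply Finset.sum_eq_zero
    intro p _
    rw [inner_smul_left, hee, if_neg (by simp)]
    ring
  -- key computation: moments with respect to each vacuum state
  have key : ∀ q : Fin r,
      (inner ℂ (e (q, ([] : List (Fin r × Fin t)))) ((om u ^ m) (e (q, [])))
        : ℂ) = ((pf m 0 : ℤ) : ℂ) := by
    intro q
    set Ω : H := e (q, ([] : List (Fin r × Fin t))) with hΩ
    set Om : ℕ → H := fun n => ((w u) ^ n) Ω with hOm
    have hOm0 : Om 0 = Ω := by simp [hOm]
    have hOmsucc : ∀ n, Om (n + 1) = w u (Om n) := by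
      intro n
      simp only [hOm, pow_succ']
      rfl
    have hstar0 : adjoint (w u) (Om 0) = 0 := by rw [hOm0]; exact hadjvac q
    have hstar : ∀ n, adjoint (w u) (Om (n + 1)) = Om n := by
      intro n
      rw [hOmsucc]
      have := congrArg (fun A => A (Om n)) (part1 u u)
      simpa [ContinuousLinearMap.mul_apply] using this
    have hinner : ∀ n k, (inner ℂ (Om n) (Om k) : ℂ) = if n = k then 1 else 0 := by
      intro n
      induction n with
      | zero =>
        intro k
        cases k with
        | zero => rw [if_pos rfl, hOm0, hee, if_pos rfl]
        | succ k =>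
          rw [if_neg (by omega), hOmsucc, ← adjoint_inner_left, hstar0, inner_zero_left]
      | succ n ih =>
        intro k
        cases k with
        | zero =>
          rw [if_neg (by omega), hOmsucc, ← adjoint_inner_right]
          rw [hstar0, inner_zero_right]
        | succ k =>
          rw [hOmsucc n, ← adjoint_inner_right, hstar, ih k]
          simp
    have homact : ∀ n, om u (Om n) = Om (n + 1) + (if n = 0 then 0 else Om (n - 1)) := by
      intro n
      rw [hom, ContinuousLinearMap.add_apply, ← hOmsucc]
      cases n with
      | zero => rw [if_pos rfl, hstar0]
      | succ n => rw [if_neg (by omega), hstar]; rfl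
    have hexp : ∀ M : ℕ, (om u ^ M) Ω
        = ∑ n ∈ Finset.range (M + 1), ((pf M n : ℤ) : ℂ) • Om n := by
      intro M
      induction M with
      | zero => simp [pf, hOm0]
      | succ M ih =>
        rw [pow_succ', ContinuousLinearMap.mul_apply, ih, map_sum]
        simp only [map_smul, homact, smul_add]
        rw [Finset.sum_add_distrib]
        have e1 : (∑ n ∈ Finset.range (M + 1), ((pf M n : ℤ) : ℂ) • Om (n + 1))
            = ∑ n ∈ Finset.range (M + 2),
              ((if n = 0 then (0 : ℤ) else pf M (n - 1) : ℤ) : ℂ) • Om n := by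
          rw [Finset.sum_range_succ' (fun n =>
            ((if n = 0 then (0 : ℤ) else pf M (n - 1) : ℤ) : ℂ) • Om n) (M + 1)]
          simp
        have e2 : (∑ n ∈ Finset.range (M + 1),
              ((pf M n : ℤ) : ℂ) • (if n = 0 then (0 : H) else Om (n - 1)))
            = ∑ n ∈ Finset.range (M + 2), ((pf M (n + 1) : ℤ) : ℂ) • Om n := by
          rw [Finset.sum_range_succ' (fun n =>
            ((pf M n : ℤ) : ℂ) • (if n = 0 then (0 : H) else Om (n - 1))) M]
          rw [Finset.sum_range_succ (fun n => ((pf M (n + 1) : ℤ) : ℂ) • Om n) (M + 1)]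
          rw [Finset.sum_range_succ (fun n => ((pf M (n + 1) : ℤ) : ℂ) • Om n) M]
          rw [pf_vanish M (M + 1) (by omega), pf_vanish M (M + 2) (by omega)]
          simp
        rw [e1, e2, ← Finset.sum_add_distrib]
        refine Finset.sum_congr rfl fun n _ => ?_
        rw [← add_smul]
        congr 1
        rw [show pf (M + 1) n = pf M (n + 1) + if n = 0 then 0 else pf M (n - 1) from rfl]
        push_cast
        ring
    rw [hexp m, inner_sum]
    rw [Finset.sum_eq_single 0]
    · rw [inner_smul_right, ← hOm0, hinner 0 0, if_pos rfl, mul_one]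
    · intro n _ hn
      rw [inner_smul_right, ← hOm0, hinner 0 n, if_neg (fun h => hn h.symm), mul_zero]
    · intro h
      exact absurd (Finset.mem_range.mpr (by omega)) h
  rw [hPsi]
  have : (∑ q : Fin r, (d q : ℂ) *
      (inner ℂ (e (q, ([] : List (Fin r × Fin t)))) ((om u ^ m) (e (q, []))) : ℂ))
      = ∑ q : Fin r, (d q : ℂ) * ((pf m 0 : ℤ) : ℂ) := by
    refine Finset.sum_congr rfl fun q _ => ?_
    rw [key q]
  rw [this, ← Finset.sum_mul]
  have hsum : (∑ q : Fin r, (d q : ℂ)) = 1 := by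
    rw [← Complex.ofReal_sum, hd1, Complex.ofReal_one]
  rw [hsum, one_mul]
  by_cases hm : Even m
  · rw [if_pos hm]
    obtain ⟨k, hk⟩ := hm
    have : m = 2 * (m / 2) := by omega
    rw [this, pf_zero_even]
    norm_num
  · have hodd := Nat.not_even_iff.mp hm
    rw [if_neg hm, pf_odd m 0 (by omega)]
    norm_num
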